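/- arXiv:1411.4184 — 2 statements merged into one kernel-verified Lean document; each statement's English description precedes it below -/
import Mathlib

section
/- Let H be a finite simple graph and let A ⊆ V(H) be a nonempty set such that H[A] is connected and S := N_H(A) is nonempty. Then S is a minimal separator of H (i.e., a minimal xy-separator for some pair of vertices x, y) if and only if there exists a connected component B of H − N_H[A] with N_H(B) = S. -/
/-!
STATEMENT 3: For a nonempty `A ⊆ V(H)` with `H[A]` connected and `S := N_H(A)` nonempty,
`S` is a minimal separator of `H` iff there exists a connected component `B` of
`H − N_H[A]` with `N_H(B) = S`.
-/

/-- The (open) neighborhood of a set `A`: vertices outside `A` with a neighbor in `A`. -/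
def nbhd {V : Type*} (H : SimpleGraph V) (A : Set V) : Set V :=
  {v | v ∉ A ∧ ∃ a ∈ A, H.Adj a v}

/-- `S` is an `xy`-separator: `x, y ∉ S` and `x` and `y` lie in different connected
components of `H − S`, i.e. every walk from `x` to `y` in `H` meets `S`. -/
def IsSep {V : Type*} (H : SimpleGraph V) (x y : V) (S : Set V) : Prop :=
  x ∉ S ∧ y ∉ S ∧ ∀ p : H.Walk x y, ∃ v ∈ p.support, v ∈ S

/-- `S` is a minimal `xy`-separator: no proper subset of `S` is an `xy`-separator. -/
def IsMinSep {V : Type*} (H : SimpleGraph V) (x y : V) (S : Set V) : Prop :=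
  IsSep H x y S ∧ ∀ S' ⊂ S, ¬ IsSep H x y S'

open SimpleGraph

private lemma isSep_symm {V : Type*} {H : SimpleGraph V} {x y : V} {S : Set V}
    (h : IsSep H x y S) : IsSep H y x S := by
  obtain ⟨h1, h2, h3⟩ := h
  refine ⟨h2, h1, fun p => ?_⟩
  obtain ⟨v, hv, hvS⟩ := h3 p.reverse
  exact ⟨v, by simpa [SimpleGraph.Walk.support_reverse] using hv, hvS⟩

private lemma isMinSep_symm {V : Type*} {H : SimpleGraph V} {x y : V} {S : Set V}
    (h : IsMinSep H x y S) : IsMinSep H y x S :=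
  ⟨isSep_symm h.1, fun S' hS' hsep => h.2 S' hS' (isSep_symm hsep)⟩

/-- Any walk from a vertex of `A` to a vertex outside `A` meets `nbhd H A`. -/
private lemma walk_meets_nbhd {V : Type*} {H : SimpleGraph V} {A : Set V} :
    ∀ {x v : V} (p : H.Walk x v), x ∈ A → v ∉ A → ∃ u ∈ p.support, u ∈ nbhd H A := by
  intro x v p
  induction p with
  | nil => intro hx hv; exact absurd hx hv
  | @cons a b c h q ih =>
    intro hx hv
    by_cases hb : b ∈ A
    · obtain ⟨u, hu, huS⟩ := ih hb hv
      exact ⟨u, List.mem_cons_of_mem _ hu, huS⟩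
    · exact ⟨b, List.mem_cons_of_mem _ q.start_mem_support, ⟨hb, a, hx, h⟩⟩

/-- Since `H.induce A` is connected, any two vertices of `A` are joined by a walk
with all vertices in `A`. -/
private lemma walk_in_A {V : Type*} {H : SimpleGraph V} {A : Set V}
    (hconn : (H.induce A).Connected) {x a : V} (hx : x ∈ A) (ha : a ∈ A) :
    ∃ p : H.Walk x a, ∀ u ∈ p.support, u ∈ A := by
  obtain ⟨q⟩ := hconn.preconnected ⟨x, hx⟩ ⟨a, ha⟩
  let f : H.induce A →g H := ⟨Subtype.val, fun {u w} h => h⟩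
  refine ⟨q.map f, ?_⟩
  intro u hu
  rw [SimpleGraph.Walk.support_map, List.mem_map] at hu
  obtain ⟨⟨u', hu'⟩, _, rfl⟩ := hu
  exact hu'

/-- Core of the forward direction: if `S = nbhd H A` is a minimal `xy`-separator and
every walk from `y` to `A` meets `S`, then `y` works as the vertex `v`. -/
private lemma fwd_core {V : Type*} {H : SimpleGraph V} {A : Set V} {x y : V}
    (hmin : IsMinSep H x y (nbhd H A))
    (hyA : ∀ a ∈ A, ∀ p : H.Walk y a, ∃ u ∈ p.support, u ∈ nbhd H A) :
    y ∉ A ∪ nbhd H A ∧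
      nbhd H {w | ∃ p : H.Walk y w, ∀ u ∈ p.support, u ∉ A ∪ nbhd H A} = nbhd H A := by
  classical
  obtain ⟨⟨hxS, hyS, hsep⟩, hminl⟩ := hmin
  have hyA' : y ∉ A := by
    intro h
    obtain ⟨u, hu, huS⟩ := hyA y h SimpleGraph.Walk.nil
    simp only [SimpleGraph.Walk.support_nil, List.mem_singleton] at hu
    exact hyS (hu ▸ huS)
  have hyN : y ∉ A ∪ nbhd H A := fun h => h.elim hyA' hyS
  -- walks from y avoiding `nbhd H A` automatically avoid `A`
  have avoidA : ∀ {w : V} (p : H.Walk y w), (∀ u ∈ p.support, u ∉ nbhd H A) →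
      ∀ u ∈ p.support, u ∉ A := by
    intro w p hp u hu hua
    obtain ⟨t, ht, htS⟩ := hyA u hua (p.takeUntil u hu)
    exact hp t (p.support_takeUntil_subset hu ht) htS
  refine ⟨hyN, ?_⟩
  ext u
  constructor
  · rintro ⟨huB, w, hwB, hwu⟩
    obtain ⟨p, hp⟩ := hwB
    have hw : w ∉ A ∪ nbhd H A := hp w p.end_mem_support
    by_contra huS
    by_cases huA : u ∈ A
    · exact hw (Or.inr ⟨fun h => hw (Or.inl h), u, huA, hwu.symm⟩)
    · refine huB ⟨p.concat hwu, ?_⟩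
      intro v hv
      rw [SimpleGraph.Walk.support_concat, List.mem_append,
        List.mem_singleton] at hv
      rcases hv with hv | rfl
      · exact hp v hv
      · exact fun h => h.elim huA huS
  · intro huS
    have huB : u ∉ {w | ∃ p : H.Walk y w, ∀ u ∈ p.support, u ∉ A ∪ nbhd H A} := by
      rintro ⟨p, hp⟩
      exact hp u p.end_mem_support (Or.inr huS)
    -- use minimality with S' = S \ {u}
    have hss : nbhd H A \ {u} ⊂ nbhd H A := Set.sdiff_singleton_ssubset.mpr huS
    have hP : ∃ p : H.Walk x y, ∀ v ∈ p.support, v ∉ nbhd H A \ {u} := by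
      by_contra hc
      push_neg at hc
      exact hminl _ hss ⟨fun h => hxS h.1, fun h => hyS h.1, fun p => hc p⟩
    obtain ⟨p, hp⟩ := hP
    obtain ⟨t, ht, htS⟩ := hsep p
    have htu : t = u := by
      by_contra hne
      exact hp t ht ⟨htS, hne⟩
    subst htu
    have hur : t ∈ p.reverse.support := by
      rw [SimpleGraph.Walk.support_reverse]; simpa using ht
    set q := p.reverse.takeUntil t hur with hq
    have hcount : q.support.count t = 1 := p.reverse.count_support_takeUntil_eq_one hur
    have hqsub : ∀ v ∈ q.support, v ∈ p.support := by
      intro v hv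
      have := p.reverse.support_takeUntil_subset hur hv
      rw [SimpleGraph.Walk.support_reverse] at this
      exact List.mem_reverse.mp this
    have hqS : ∀ v ∈ q.support, v ∈ nbhd H A → v = t := by
      intro v hv hvS
      by_contra hne
      exact hp v (hqsub v hv) ⟨hvS, hne⟩
    have hty : t ≠ y := fun h => hyS (h ▸ htS)
    obtain ⟨w, hadj, r, hqr⟩ := SimpleGraph.Walk.exists_eq_cons_of_ne hty q.reverse
    have hcount' : q.reverse.support.count t = 1 := by
      rw [SimpleGraph.Walk.support_reverse, List.count_reverse]; exact hcount
    have htr : t ∉ r.support := by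
      rw [hqr, SimpleGraph.Walk.support_cons, List.count_cons_self] at hcount'
      have h0 : List.count t r.support = 0 := by omega
      exact List.count_eq_zero.mp h0
    have hrq : ∀ v ∈ r.support, v ∈ q.support := by
      intro v hv
      have : v ∈ q.reverse.support := by
        rw [hqr, SimpleGraph.Walk.support_cons]; exact List.mem_cons_of_mem _ hv
      rw [SimpleGraph.Walk.support_reverse] at this
      exact List.mem_reverse.mp this
    have hrS : ∀ v ∈ r.support, v ∉ nbhd H A := by
      intro v hv hvS
      exact htr ((hqS v (hrq v hv) hvS) ▸ hv)
    have hwB : w ∈ {w | ∃ p : H.Walk y w, ∀ u ∈ p.support, u ∉ A ∪ nbhd H A} := by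
      refine ⟨r.reverse, ?_⟩
      have hrS' : ∀ v ∈ r.reverse.support, v ∉ nbhd H A := by
        intro v hv
        rw [SimpleGraph.Walk.support_reverse] at hv
        exact hrS v (List.mem_reverse.mp hv)
      intro v hv h
      exact h.elim (avoidA r.reverse hrS' v hv) (hrS' v hv)
    exact ⟨huB, w, hwB, hadj.symm⟩

theorem separator_chunk_characterization {V : Type*} [Fintype V] (H : SimpleGraph V)
    (A : Set V) (hA : A.Nonempty) (hconn : (H.induce A).Connected)
    (S : Set V) (hS : S = nbhd H A) (hSne : S.Nonempty) :
    (∃ x y : V, IsMinSep H x y S) ↔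
      (∃ v : V, v ∉ A ∪ nbhd H A ∧
        nbhd H {w | ∃ p : H.Walk v w, ∀ u ∈ p.support, u ∉ A ∪ nbhd H A} = S) := by
  subst hS
  constructor
  · rintro ⟨x, y, hmin⟩
    by_cases hy : ∀ a ∈ A, ∀ p : H.Walk y a, ∃ u ∈ p.support, u ∈ nbhd H A
    · exact ⟨y, (fwd_core hmin hy).1, (fwd_core hmin hy).2⟩
    · push_neg at hy
      obtain ⟨a2, ha2, py, hpy⟩ := hy
      have hx : ∀ a ∈ A, ∀ p : H.Walk x a, ∃ u ∈ p.support, u ∈ nbhd H A := by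
        by_contra hc
        push_neg at hc
        obtain ⟨a1, ha1, px, hpx⟩ := hc
        obtain ⟨pa, hpa⟩ := walk_in_A hconn ha1 ha2
        obtain ⟨t, ht, htS⟩ := hmin.1.2.2 (px.append (pa.append py.reverse))
        rw [SimpleGraph.Walk.mem_support_append_iff,
          SimpleGraph.Walk.mem_support_append_iff] at ht
        rcases ht with ht | ht | ht
        · exact hpx t ht htS
        · exact htS.1 (hpa t ht)
        · rw [SimpleGraph.Walk.support_reverse] at ht
          exact hpy t (List.mem_reverse.mp ht) htS
      have hmin' := isMinSep_symm hmin
      exact ⟨x, (fwd_core hmin' hx).1, (fwd_core hmin' hx).2⟩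
  · rintro ⟨v, hv, hN⟩
    obtain ⟨x, hx⟩ := hA
    refine ⟨x, v, ⟨fun h => h.1 hx, fun h => hv (Or.inr h), fun p =>
      walk_meets_nbhd p hx (fun h => hv (Or.inl h))⟩, ?_⟩
    rintro S' hss ⟨-, -, hsep'⟩
    obtain ⟨s, hsS, hsS'⟩ := Set.exists_of_ssubset hss
    obtain ⟨hsA, a, haA, has⟩ := hsS
    have hsB : s ∈ nbhd H {w | ∃ p : H.Walk v w, ∀ u ∈ p.support, u ∉ A ∪ nbhd H A} := by
      rw [hN]; exact ⟨hsA, a, haA, has⟩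
    obtain ⟨-, b, hbB, hbs⟩ := hsB
    obtain ⟨pb, hpb⟩ := hbB
    obtain ⟨pa, hpa⟩ := walk_in_A hconn hx haA
    obtain ⟨t, ht, htS'⟩ :=
      hsep' (pa.append (SimpleGraph.Walk.cons has (SimpleGraph.Walk.cons hbs.symm pb.reverse)))
    have htS : t ∈ nbhd H A := hss.subset htS'
    rw [SimpleGraph.Walk.mem_support_append_iff] at ht
    rcases ht with ht | ht
    · exact htS.1 (hpa t ht)
    · rw [SimpleGraph.Walk.support_cons, List.mem_cons] at ht
      rcases ht with hta | ht
      · exact htS.1 (hta ▸ haA)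
      · rw [SimpleGraph.Walk.support_cons, List.mem_cons] at ht
        rcases ht with hts | ht
        · exact hsS' (by rwa [hts] at htS')
        · rw [SimpleGraph.Walk.support_reverse] at ht
          exact hpb t (List.mem_reverse.mp ht) (Or.inr htS)
end

section
/- Let H be a finite simple graph and let A ⊆ V(H) be nonempty with H[A] connected, S := N_H(A), and suppose there exists a connected component B of H − N_H[A] with N_H(B) = S (i.e., N_H[A] induces a separator chunk). Let a1, a2 ∈ A be distinct and let Z ⊆ N_H[A] ∖ {a1, a2} be a set separating a1 from a2 in the induced subgraph H[N_H[A]]. Then there exists a nonempty set A' ⊆ V(H) with H[A'] connected such that: (a) a1 ∈ A' or a2 ∈ A'; (b) N_H[A'] is a proper subset of N_H[A]; (c) N_H(A') ⊆ Z ∪ S; and (d) N_H(A') is a minimal separator of H. -/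
namespace SepAux

open SimpleGraph

variable {V : Type*} {H : SimpleGraph V}

/-- Vertices reachable from `a` by a walk avoiding `T`. -/
def reachSet (H : SimpleGraph V) (T : Set V) (a : V) : Set V :=
  {w | ∃ p : H.Walk a w, ∀ u ∈ p.support, u ∉ T}

variable {T : Set V} {a : V}

lemma self_mem_reachSet (ha : a ∉ T) : a ∈ reachSet H T a :=
  ⟨SimpleGraph.Walk.nil, by
    intro u hu
    simp only [SimpleGraph.Walk.support_nil, List.mem_singleton] at hu
    subst hu; exact ha⟩

lemma reachSet_not_mem {w : V} (hw : w ∈ reachSet H T a) : w ∉ T := by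
  obtain ⟨p, hp⟩ := hw
  exact hp w p.end_mem_support

lemma reachSet_extend {w u : V} (hw : w ∈ reachSet H T a) (hadj : H.Adj w u) (hu : u ∉ T) :
    u ∈ reachSet H T a := by
  obtain ⟨p, hp⟩ := hw
  refine ⟨p.concat hadj, ?_⟩
  intro x hx
  rw [SimpleGraph.Walk.support_concat, List.mem_append,
    List.mem_singleton] at hx
  rcases hx with h | rfl
  · exact hp x h
  · exact hu

lemma reachSet_trans {w x : V} (hw : w ∈ reachSet H T a) (hx : x ∈ reachSet H T w) :
    x ∈ reachSet H T a := by
  obtain ⟨p, hp⟩ := hw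
  obtain ⟨q, hq⟩ := hx
  refine ⟨p.append q, ?_⟩
  intro u hu
  rcases (SimpleGraph.Walk.mem_support_append_iff _ _).mp hu with h | h
  · exact hp u h
  · exact hq u h

lemma reachSet_rev {w : V} (hw : w ∈ reachSet H T a) : a ∈ reachSet H T w := by
  obtain ⟨p, hp⟩ := hw
  refine ⟨p.reverse, ?_⟩
  intro u hu
  rw [SimpleGraph.Walk.support_reverse, List.mem_reverse] at hu
  exact hp u hu

lemma reachSet_mono {T' : Set V} (hT : T ⊆ T') {w : V} (hw : w ∈ reachSet H T' a) :
    w ∈ reachSet H T a := by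
  obtain ⟨p, hp⟩ := hw
  exact ⟨p, fun u hu h => hp u hu (hT h)⟩

lemma support_mem_reachSet_aux :
    ∀ {x w : V} (p : H.Walk x w), (∀ u ∈ p.support, u ∉ T) → x ∈ reachSet H T a →
      ∀ u ∈ p.support, u ∈ reachSet H T a := by
  intro x w p
  induction p with
  | nil =>
    intro h hx u hu
    simp only [SimpleGraph.Walk.support_nil, List.mem_singleton] at hu
    subst hu; exact hx
  | @cons x z w hadj q ih =>
    intro h hx u hu
    have hz : z ∈ reachSet H T a :=
      reachSet_extend hx hadj (h z (by simp [SimpleGraph.Walk.support_cons]))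
    rw [SimpleGraph.Walk.support_cons, List.mem_cons] at hu
    rcases hu with rfl | hu
    · exact hx
    · exact ih (fun v hv => h v (by simp [SimpleGraph.Walk.support_cons, hv])) hz u hu

lemma support_mem_reachSet {w : V} (p : H.Walk a w) (hp : ∀ u ∈ p.support, u ∉ T) :
    ∀ u ∈ p.support, u ∈ reachSet H T a :=
  support_mem_reachSet_aux p hp (self_mem_reachSet (hp a p.start_mem_support))

lemma walk_meet_nbhd {C : Set V} :
    ∀ {x y : V} (p : H.Walk x y), x ∈ C → y ∉ C → ∃ u ∈ p.support, u ∈ nbhd H C := by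
  intro x y p
  induction p with
  | nil => intro hx hy; exact absurd hx hy
  | @cons x z y hadj q ih =>
    intro hx hy
    by_cases hz : z ∈ C
    · obtain ⟨u, hu, h⟩ := ih hz hy
      exact ⟨u, by simp [SimpleGraph.Walk.support_cons, hu], h⟩
    · exact ⟨z, by simp [SimpleGraph.Walk.support_cons], hz, x, hx, hadj⟩

lemma nbhd_reachSet_subset : nbhd H (reachSet H T a) ⊆ T := by
  intro u hu
  obtain ⟨hu1, w, hw, hadj⟩ := hu
  by_contra huT
  exact hu1 (reachSet_extend hw hadj huT)

lemma mem_nbhd_reachSet_of_walk {t : V} (ht : t ∈ T) :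
    ∀ {x y : V} (p : H.Walk x y), x ∈ reachSet H T a →
      (∀ u ∈ p.support, u ∈ T → u = t) → t ∈ p.support →
      t ∈ nbhd H (reachSet H T a) := by
  intro x y p
  induction p with
  | nil =>
    intro hx _ htm
    simp only [SimpleGraph.Walk.support_nil, List.mem_singleton] at htm
    subst htm
    exact absurd ht (reachSet_not_mem hx)
  | @cons x z y hadj q ih =>
    intro hx hall htm
    by_cases hz : z ∈ T
    · have hzt : z = t := hall z (by simp [SimpleGraph.Walk.support_cons]) hz
      subst hzt
      exact ⟨fun hmem => reachSet_not_mem hmem ht, x, hx, hadj⟩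
    · have hz' : z ∈ reachSet H T a := reachSet_extend hx hadj hz
      have htm' : t ∈ q.support := by
        rw [SimpleGraph.Walk.support_cons, List.mem_cons] at htm
        rcases htm with rfl | h
        · exact absurd ht (reachSet_not_mem hx)
        · exact h
      exact ih hz' (fun u hu => hall u (by simp [SimpleGraph.Walk.support_cons, hu])) htm'

lemma IsSep.symm' {x y : V} {S : Set V} (h : IsSep H x y S) : IsSep H y x S := by
  refine ⟨h.2.1, h.1, fun p => ?_⟩
  obtain ⟨v, hv, hvS⟩ := h.2.2 p.reverse
  rw [SimpleGraph.Walk.support_reverse, List.mem_reverse] at hv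
  exact ⟨v, hv, hvS⟩

lemma IsMinSep.symm' {x y : V} {S : Set V} (h : IsMinSep H x y S) : IsMinSep H y x S :=
  ⟨IsSep.symm' h.1, fun S' hS' hsep => h.2 S' hS' (IsSep.symm' hsep)⟩

lemma reachSet_induce_reachable {C : Set V} :
    ∀ {x w : V} (p : H.Walk x w) (hx : x ∈ C) (hw : w ∈ C),
      (∀ u ∈ p.support, u ∈ C) → (H.induce C).Reachable ⟨x, hx⟩ ⟨w, hw⟩ := by
  intro x w p
  induction p with
  | nil => intro hx hw _; exact SimpleGraph.Reachable.refl _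
  | @cons x z w hadj q ih =>
    intro hx hw hall
    have hz : z ∈ C := hall z (by simp [SimpleGraph.Walk.support_cons])
    have h1 : (H.induce C).Adj ⟨x, hx⟩ ⟨z, hz⟩ := hadj
    exact (h1.reachable).trans
      (ih hz hw (fun u hu => hall u (by simp [SimpleGraph.Walk.support_cons, hu])))

/-- Main auxiliary lemma: given a minimal `a`-`b` separator `T ⊆ Z ∪ N(A)` such that the
reach-component of `a` is full and avoids `N(A)`, that component works as `A'`. -/
lemma aux_main {A Z : Set V} {a b : V}
    (ha : a ∈ A) (hb : b ∈ A) (hbZ : b ∉ Z) (hZD : Z ⊆ A ∪ nbhd H A)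
    {T : Set V} (hTZS : T ⊆ Z ∪ nbhd H A)
    (hmin : IsMinSep H a b T)
    (hfull : T ⊆ nbhd H (reachSet H T a))
    (hSC : ∀ s ∈ nbhd H A, s ∉ reachSet H T a) :
    ∃ A' : Set V, A'.Nonempty ∧ (H.induce A').Connected ∧
      a ∈ A' ∧
      (A' ∪ nbhd H A') ⊂ (A ∪ nbhd H A) ∧
      nbhd H A' ⊆ Z ∪ nbhd H A ∧
      (∃ x y : V, IsMinSep H x y (nbhd H A')) := by
  classical
  set C := reachSet H T a with hCdef
  have haT : a ∉ T := hmin.1.1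
  have haC : a ∈ C := self_mem_reachSet haT
  have hCA : C ⊆ A := by
    intro w hw
    by_contra hwA
    obtain ⟨p, hp⟩ := hw
    obtain ⟨u, hu, hun⟩ := walk_meet_nbhd p ha hwA
    exact hSC u hun (support_mem_reachSet p hp u hu)
  have hnbhdC : nbhd H C = T := Set.Subset.antisymm nbhd_reachSet_subset hfull
  have hbC : b ∉ C := by
    intro hbc
    obtain ⟨p, hp⟩ := hbc
    obtain ⟨v, hv, hvT⟩ := hmin.1.2.2 p
    exact hp v hv hvT
  have hbT : b ∉ T := by
    intro hbT
    rcases hTZS hbT with h | h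
    · exact hbZ h
    · exact h.1 hb
  refine ⟨C, ⟨a, haC⟩, ?_, haC, ?_, ?_, a, b, by rwa [hnbhdC]⟩
  · have key : ∀ x : C, (H.induce C).Reachable ⟨a, haC⟩ x := by
      rintro ⟨x, hx⟩
      obtain ⟨p, hp⟩ := hx
      exact reachSet_induce_reachable p haC ⟨p, hp⟩ (support_mem_reachSet p hp)
    rw [SimpleGraph.connected_iff]
    exact ⟨fun x y => (key x).symm.trans (key y), ⟨⟨a, haC⟩⟩⟩
  · rw [Set.ssubset_def]
    constructor
    · intro u hu
      rcases hu with hu | hu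
      · exact Or.inl (hCA hu)
      · rw [hnbhdC] at hu
        rcases hTZS hu with h | h
        · exact hZD h
        · exact Or.inr h
    · intro habs
      rcases habs (Or.inl hb) with h | h
      · exact hbC h
      · rw [hnbhdC] at h; exact hbT h
  · rw [hnbhdC]; exact hTZS

end SepAux

open SepAux in
theorem separator_chunk_splitting {V : Type*} [Fintype V] (H : SimpleGraph V)
    (A : Set V) (hA : A.Nonempty) (hconn : (H.induce A).Connected)
    (S : Set V) (hS : S = nbhd H A)
    (hB : ∃ v : V, v ∉ A ∪ nbhd H A ∧
        nbhd H {w | ∃ p : H.Walk v w, ∀ u ∈ p.support, u ∉ A ∪ nbhd H A} = S)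
    (a1 a2 : V) (ha1 : a1 ∈ A) (ha2 : a2 ∈ A) (hne : a1 ≠ a2)
    (Z : Set V) (hZ : Z ⊆ (A ∪ nbhd H A) \ {a1, a2})
    (hsep : ∀ p : H.Walk a1 a2, (∀ u ∈ p.support, u ∈ A ∪ nbhd H A) →
      ∃ u ∈ p.support, u ∈ Z) :
    ∃ A' : Set V, A'.Nonempty ∧ (H.induce A').Connected ∧
      (a1 ∈ A' ∨ a2 ∈ A') ∧
      (A' ∪ nbhd H A') ⊂ (A ∪ nbhd H A) ∧
      nbhd H A' ⊆ Z ∪ S ∧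
      (∃ x y : V, IsMinSep H x y (nbhd H A')) := by
  classical
  subst hS
  set S := nbhd H A with hSdef
  set D := A ∪ S with hDdef
  have hZD : Z ⊆ D := fun z hz => (hZ hz).1
  have ha1Z : a1 ∉ Z := fun h => (hZ h).2 (by simp)
  have ha2Z : a2 ∉ Z := fun h => (hZ h).2 (by simp)
  have hSD : S ⊆ D := fun s hs => Or.inr hs
  -- the component of a1 in H[A \ Z]
  set A1 := reachSet H ((A \ Z)ᶜ) a1 with hA1def
  have ha1A1 : a1 ∈ A1 := self_mem_reachSet (by simp [ha1, ha1Z])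
  have hA1sub : A1 ⊆ A \ Z := by
    intro w hw
    have := reachSet_not_mem hw
    simpa using this
  set T₁ := nbhd H A1 with hT₁def
  have hT₁ZS : T₁ ⊆ Z ∪ S := by
    intro u hu
    obtain ⟨hu1, w, hw, hadj⟩ := hu
    by_cases huZ : u ∈ Z
    · exact Or.inl huZ
    by_cases huA : u ∈ A
    · exact absurd (reachSet_extend hw hadj (by simp [huA, huZ])) hu1
    · exact Or.inr ⟨huA, w, (hA1sub hw).1, hadj⟩
  have ha2A1 : a2 ∉ A1 := by
    intro h
    obtain ⟨p, hp⟩ := h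
    have hp' : ∀ u ∈ p.support, u ∈ A \ Z := fun u hu => by
      have := hp u hu; simpa using this
    obtain ⟨u, hu, huZ⟩ := hsep p (fun u hu => Or.inl (hp' u hu).1)
    exact (hp' u hu).2 huZ
  have ha2T₁ : a2 ∉ T₁ := by
    intro h
    obtain ⟨h1, w, hw, hadj⟩ := h
    obtain ⟨p, hp⟩ := hw
    have hcond : ∀ u ∈ (p.concat hadj).support, u ∈ A ∪ S := by
      intro u hu
      rw [SimpleGraph.Walk.support_concat, List.mem_append,
        List.mem_singleton] at hu
      rcases hu with hu | rfl
      · have := hp u hu; simp at this; exact Or.inl this.1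
      · exact Or.inl ha2
    obtain ⟨u, hu, huZ⟩ := hsep (p.concat hadj) hcond
    rw [SimpleGraph.Walk.support_concat, List.mem_append,
      List.mem_singleton] at hu
    rcases hu with hu | rfl
    · have := hp u hu; simp at this; exact this.2 huZ
    · exact ha2Z huZ
  have ha1T₁ : a1 ∉ T₁ := fun h => h.1 ha1A1
  have hT₁sep : IsSep H a1 a2 T₁ :=
    ⟨ha1T₁, ha2T₁, fun p => walk_meet_nbhd p ha1A1 ha2A1⟩
  -- take a minimal separator T ⊆ T₁
  set 𝒯 : Set (Set V) := {T' | T' ⊆ T₁ ∧ IsSep H a1 a2 T'} with h𝒯def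
  obtain ⟨T, hT𝒯, hTmin'⟩ :=
    Set.Finite.exists_minimal (Set.toFinite 𝒯) ⟨T₁, subset_rfl, hT₁sep⟩
  have hTmin : ∀ T' ∈ 𝒯, id T' ≤ id T → id T = id T' :=
    fun T' h1 h2 => le_antisymm (hTmin' h1 h2) h2
  obtain ⟨hTT₁, hTsep⟩ := hT𝒯
  have hTminsep : IsMinSep H a1 a2 T := by
    refine ⟨hTsep, fun S' hS' hsepS' => ?_⟩
    rw [Set.ssubset_def] at hS'
    have heq : T = S' := hTmin S' ⟨hS'.1.trans hTT₁, hsepS'⟩ hS'.1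
    exact hS'.2 (by rw [← heq])
  have hTZS : T ⊆ Z ∪ S := hTT₁.trans hT₁ZS
  have hTD : T ⊆ D := hTZS.trans (Set.union_subset hZD hSD)
  -- T minus any vertex is not a separator
  have hdel : ∀ t ∈ T, ¬ IsSep H a1 a2 (T \ {t}) := by
    intro t ht hsep'
    have hmem : T \ {t} ∈ 𝒯 := ⟨Set.diff_subset.trans hTT₁, hsep'⟩
    have heq : T = T \ {t} := hTmin _ hmem Set.diff_subset
    exact (heq ▸ ht : t ∈ T \ {t}).2 rfl
  -- fullness of the a1-side
  have hfull1 : ∀ t ∈ T, t ∈ nbhd H (reachSet H T a1) := by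
    intro t ht
    by_contra hnot
    apply hdel t ht
    refine ⟨fun h => hTsep.1 h.1, fun h => hTsep.2.1 h.1, fun p => ?_⟩
    by_contra hno
    push_neg at hno
    have hall : ∀ u ∈ p.support, u ∈ T → u = t := by
      intro u hu huT
      by_contra hut
      exact hno u hu ⟨huT, by simpa using hut⟩
    obtain ⟨u0, hu0, hu0T⟩ := hTsep.2.2 p
    have hu0t : u0 = t := hall u0 hu0 hu0T
    subst hu0t
    exact hnot (mem_nbhd_reachSet_of_walk ht p (self_mem_reachSet hTsep.1) hall hu0)
  -- fullness of the a2-side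
  have hfull2 : ∀ t ∈ T, t ∈ nbhd H (reachSet H T a2) := by
    intro t ht
    by_contra hnot
    apply hdel t ht
    refine ⟨fun h => hTsep.1 h.1, fun h => hTsep.2.1 h.1, fun p => ?_⟩
    by_contra hno
    push_neg at hno
    have hall : ∀ u ∈ p.support, u ∈ T → u = t := by
      intro u hu huT
      by_contra hut
      exact hno u hu ⟨huT, by simpa using hut⟩
    obtain ⟨u0, hu0, hu0T⟩ := hTsep.2.2 p
    have hu0t : u0 = t := hall u0 hu0 hu0T
    subst hu0t
    refine hnot (mem_nbhd_reachSet_of_walk ht p.reverse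
      (self_mem_reachSet hTsep.2.1) ?_ ?_)
    · intro u hu
      rw [SimpleGraph.Walk.support_reverse, List.mem_reverse] at hu
      exact hall u hu
    · rw [SimpleGraph.Walk.support_reverse, List.mem_reverse]
      exact hu0
  -- the two components are disjoint
  have hC12disj : ∀ w, w ∈ reachSet H T a1 → w ∈ reachSet H T a2 → False := by
    intro w h1 h2
    obtain ⟨p, hp⟩ := h1
    obtain ⟨q, hq⟩ := h2
    obtain ⟨u, hu, huT⟩ := hTsep.2.2 (p.append q.reverse)
    rcases (SimpleGraph.Walk.mem_support_append_iff _ _).mp hu with h | h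
    · exact hp u h huT
    · rw [SimpleGraph.Walk.support_reverse, List.mem_reverse] at h
      exact hq u h huT
  -- the chunk argument: not both components can meet S
  obtain ⟨v, hvD, hBS⟩ := hB
  have hBS' : nbhd H (reachSet H D v) = S := hBS
  have hnotboth : ¬((∃ s ∈ S, s ∈ reachSet H T a1) ∧ (∃ s ∈ S, s ∈ reachSet H T a2)) := by
    rintro ⟨⟨s1, hs1S, hs1C⟩, ⟨s2, hs2S, hs2C⟩⟩
    have hs1B : s1 ∈ nbhd H (reachSet H D v) := hBS'.symm ▸ hs1S
    have hs2B : s2 ∈ nbhd H (reachSet H D v) := hBS'.symm ▸ hs2S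
    obtain ⟨_, b1, hb1B, hadj1⟩ := hs1B
    obtain ⟨_, b2, hb2B, hadj2⟩ := hs2B
    have hb1T : b1 ∉ T := fun h => reachSet_not_mem hb1B (hTD h)
    have hb2T : b2 ∉ T := fun h => reachSet_not_mem hb2B (hTD h)
    have hb1C1 : b1 ∈ reachSet H T a1 := reachSet_extend hs1C hadj1.symm hb1T
    have hb2C2 : b2 ∈ reachSet H T a2 := reachSet_extend hs2C hadj2.symm hb2T
    have hb2b1 : b2 ∈ reachSet H D b1 :=
      reachSet_trans (reachSet_rev hb1B) hb2B
    have hb2C1 : b2 ∈ reachSet H T a1 :=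
      reachSet_trans hb1C1 (reachSet_mono hTD hb2b1)
    exact hC12disj b2 hb2C1 hb2C2
  have hcases : (∀ s ∈ S, s ∉ reachSet H T a1) ∨ (∀ s ∈ S, s ∉ reachSet H T a2) := by
    by_contra h
    push_neg at h
    exact hnotboth ⟨h.1, h.2⟩
  rcases hcases with hside | hside
  · obtain ⟨A', h1, h2, h3, h4, h5, h6⟩ :=
      aux_main ha1 ha2 ha2Z hZD hTZS hTminsep hfull1 hside
    exact ⟨A', h1, h2, Or.inl h3, h4, h5, h6⟩
  · obtain ⟨A', h1, h2, h3, h4, h5, h6⟩ :=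
      aux_main ha2 ha1 ha1Z hZD hTZS (IsMinSep.symm' hTminsep) hfull2 hside
    exact ⟨A', h1, h2, Or.inr h3, h4, h5, h6⟩
end
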